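/- For every integer d ≥ 1 and every real c > 0 there exists a constant C = C(d,c) < ∞ such that for every v ∈ ℤ^d and every real t ≥ 1: Σ_{w ∈ ℤ^d} exp(−c·|w|²/t) · (|v − w| + 1)^{1−d} ≤ C·t^{1/2}, where |x| denotes the ℓ^∞ norm max_{1≤i≤d} |x_i| of x ∈ ℤ^d. -/

import Mathlib

open scoped ENNReal

/-- The ℓ∞ norm of a point of ℤ^d. -/
def normInf {d : ℕ} (x : Fin d → ℤ) : ℤ :=
  ((Finset.univ.sup fun i => (x i).natAbs : ℕ) : ℤ)

private def nNorm {d : ℕ} (x : Fin d → ℤ) : ℕ :=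
  Finset.univ.sup fun i => (x i).natAbs

private lemma normInf_eq {d : ℕ} (x : Fin d → ℤ) : normInf x = (nNorm x : ℤ) := rfl

private lemma nNorm_add_le {d : ℕ} (x y : Fin d → ℤ) :
    nNorm (x + y) ≤ nNorm x + nNorm y := by
  apply Finset.sup_le
  intro i _
  calc ((x + y) i).natAbs = (x i + y i).natAbs := rfl
    _ ≤ (x i).natAbs + (y i).natAbs := Int.natAbs_add_le _ _
    _ ≤ nNorm x + nNorm y :=
        add_le_add (Finset.le_sup (f := fun i => (x i).natAbs) (Finset.mem_univ i))
          (Finset.le_sup (f := fun i => (y i).natAbs) (Finset.mem_univ i))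

private lemma nNorm_neg {d : ℕ} (x : Fin d → ℤ) : nNorm (-x) = nNorm x := by
  unfold nNorm
  congr 1
  ext i
  simp

private lemma natGaussSum_le (c t : ℝ) (hc : 0 < c) (ht : 1 ≤ t) :
    ∑' k : ℕ, ENNReal.ofReal (Real.exp (-c * (k : ℝ) ^ 2 / t)) ≤
      ENNReal.ofReal (Real.exp (2 * c) / c * Real.sqrt t) := by
  have ht0 : (0:ℝ) < t := lt_of_lt_of_le one_pos ht
  set s := Real.sqrt t with hs
  have hs1 : 1 ≤ s := by
    rw [hs, show (1:ℝ) = Real.sqrt 1 by simp]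
    exact Real.sqrt_le_sqrt ht
  have hs0 : (0:ℝ) < s := lt_of_lt_of_le one_pos hs1
  have hst : s ^ 2 = t := Real.sq_sqrt ht0.le
  set u := c / s with hu
  have hu0 : 0 < u := div_pos hc hs0
  have huc : u ≤ c := div_le_self hc.le hs1
  set r := Real.exp (-u) with hr
  have hr0 : 0 < r := Real.exp_pos _
  have hr1 : r < 1 := by
    rw [hr, Real.exp_lt_one_iff]
    linarith
  have hpt : ∀ k : ℕ, Real.exp (-c * (k : ℝ) ^ 2 / t) ≤ Real.exp c * r ^ k := by
    intro k
    have h1 : r ^ k = Real.exp ((k : ℕ) * (-u)) := by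
      rw [hr, ← Real.exp_nat_mul]
    rw [h1, ← Real.exp_add]
    apply Real.exp_le_exp.mpr
    rw [hu, div_le_iff₀ ht0, ← hst]
    have hk : (0:ℝ) ≤ (k : ℝ) := Nat.cast_nonneg k
    have e1 : (c + (k:ℝ) * -(c / s)) * s ^ 2 = c * s^2 - c * (k:ℝ) * s := by
      field_simp; ring
    rw [e1]
    nlinarith [sq_nonneg ((k:ℝ) - s), sq_nonneg ((k:ℝ) + s), mul_pos hc hs0]
  have hsum : Summable fun k : ℕ => Real.exp c * r ^ k :=
    (summable_geometric_of_lt_one hr0.le hr1).mul_left _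
  calc ∑' k : ℕ, ENNReal.ofReal (Real.exp (-c * (k : ℝ) ^ 2 / t))
      ≤ ∑' k : ℕ, ENNReal.ofReal (Real.exp c * r ^ k) :=
        ENNReal.tsum_le_tsum fun k => ENNReal.ofReal_le_ofReal (hpt k)
    _ = ENNReal.ofReal (∑' k : ℕ, Real.exp c * r ^ k) :=
        (ENNReal.ofReal_tsum_of_nonneg (fun k => by positivity) hsum).symm
    _ ≤ ENNReal.ofReal (Real.exp (2 * c) / c * s) := by
        apply ENNReal.ofReal_le_ofReal
        rw [tsum_mul_left, tsum_geometric_of_lt_one hr0.le hr1]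
        have hru : r * Real.exp u = 1 := by rw [hr, ← Real.exp_add]; simp
        have h2 : u * r ≤ 1 - r := by nlinarith [Real.add_one_le_exp u]
        have h1r : (0:ℝ) < 1 - r := by linarith
        have h3 : (1 - r)⁻¹ ≤ (u * r)⁻¹ := by
          apply inv_anti₀ (by positivity) h2
        have h4 : (u * r)⁻¹ = Real.exp u * (s / c) := by
          rw [mul_inv, hu]
          have : r⁻¹ = Real.exp u := by rw [hr, ← Real.exp_neg, neg_neg]
          rw [this]; field_simp; ring
        have h5 : Real.exp u ≤ Real.exp c := Real.exp_le_exp.mpr huc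
        calc Real.exp c * (1 - r)⁻¹ ≤ Real.exp c * (Real.exp u * (s / c)) := by
              rw [← h4]; exact mul_le_mul_of_nonneg_left h3 (Real.exp_pos _).le
          _ ≤ Real.exp c * (Real.exp c * (s / c)) := by
              apply mul_le_mul_of_nonneg_left _ (Real.exp_pos _).le
              exact mul_le_mul_of_nonneg_right h5 (by positivity)
          _ = Real.exp (2 * c) / c * s := by
              rw [two_mul, Real.exp_add]; field_simp

private lemma intGaussSum_le (c t : ℝ) (hc : 0 < c) (ht : 1 ≤ t) :
    ∑' k : ℤ, ENNReal.ofReal (Real.exp (-c * (k : ℝ) ^ 2 / t)) ≤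
      ENNReal.ofReal (2 * (Real.exp (2 * c) / c) * Real.sqrt t) := by
  have ht0 : (0:ℝ) < t := lt_of_lt_of_le one_pos ht
  set f : ℤ → ℝ≥0∞ := fun k => ENNReal.ofReal (Real.exp (-c * (k : ℝ) ^ 2 / t)) with hf
  have hsplit : ∑' k : ℤ, f k = (∑' k : ℕ, f k) + ∑' k : ℕ, f (-(k+1)) :=
    tsum_of_nat_of_neg_add_one ENNReal.summable ENNReal.summable
  have hneg : ∀ k : ℕ, f (-(k+1)) ≤ f k := by
    intro k
    apply ENNReal.ofReal_le_ofReal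
    apply Real.exp_le_exp.mpr
    rw [div_le_div_iff_of_pos_right ht0]
    push_cast
    nlinarith [Nat.cast_nonneg (α := ℝ) k]
  have hN := natGaussSum_le c t hc ht
  calc ∑' k : ℤ, f k = (∑' k : ℕ, f k) + ∑' k : ℕ, f (-(k+1)) := hsplit
    _ ≤ (∑' k : ℕ, f k) + ∑' k : ℕ, f k :=
        add_le_add (le_refl _) (ENNReal.tsum_le_tsum hneg)
    _ ≤ ENNReal.ofReal (Real.exp (2 * c) / c * Real.sqrt t) +
        ENNReal.ofReal (Real.exp (2 * c) / c * Real.sqrt t) := by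
        gcongr <;> exact hN
    _ = ENNReal.ofReal (2 * (Real.exp (2 * c) / c) * Real.sqrt t) := by
        rw [← ENNReal.ofReal_add (by positivity) (by positivity)]
        ring_nf

private lemma shiftedGaussSum_le (c t : ℝ) (hc : 0 < c) (ht : 1 ≤ t) (V : ℕ) :
    ∑' m : ℤ, ENNReal.ofReal (Real.exp (-c * ((V : ℝ) - (m.natAbs : ℝ)) ^ 2 / t)) ≤
      ENNReal.ofReal (4 * (Real.exp (2 * c) / c) * Real.sqrt t) := by
  set A : ℤ → ℝ≥0∞ := fun m => ENNReal.ofReal (Real.exp (-c * ((m:ℝ) - (V:ℝ)) ^ 2 / t)) with hA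
  set B : ℤ → ℝ≥0∞ := fun m => ENNReal.ofReal (Real.exp (-c * ((m:ℝ) + (V:ℝ)) ^ 2 / t)) with hB
  have hpt : ∀ m : ℤ,
      ENNReal.ofReal (Real.exp (-c * ((V : ℝ) - (m.natAbs : ℝ)) ^ 2 / t)) ≤ A m + B m := by
    intro m
    have habs : ((m.natAbs : ℝ)) = |(m : ℝ)| := by
      rw [Nat.cast_natAbs]; exact Int.cast_abs
    rcases abs_cases (m : ℝ) with ⟨h1, _⟩ | ⟨h1, _⟩
    · have : ((V : ℝ) - (m.natAbs : ℝ)) ^ 2 = ((m:ℝ) - (V:ℝ)) ^ 2 := by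
        rw [habs, h1]; ring
      rw [this]
      exact le_self_add
    · have : ((V : ℝ) - (m.natAbs : ℝ)) ^ 2 = ((m:ℝ) + (V:ℝ)) ^ 2 := by
        rw [habs, h1]; ring
      rw [this]
      exact le_add_self
  have hZ := intGaussSum_le c t hc ht
  have hAeq : ∑' m : ℤ, A m = ∑' k : ℤ, ENNReal.ofReal (Real.exp (-c * (k : ℝ) ^ 2 / t)) := by
    rw [← Equiv.tsum_eq (Equiv.subRight (V : ℤ))
      (fun k => ENNReal.ofReal (Real.exp (-c * (k : ℝ) ^ 2 / t)))]
    apply tsum_congr; intro m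
    simp only [Equiv.subRight_apply, hA]
    push_cast
    ring_nf
  have hBeq : ∑' m : ℤ, B m = ∑' k : ℤ, ENNReal.ofReal (Real.exp (-c * (k : ℝ) ^ 2 / t)) := by
    rw [← Equiv.tsum_eq (Equiv.addRight (V : ℤ))
      (fun k => ENNReal.ofReal (Real.exp (-c * (k : ℝ) ^ 2 / t)))]
    apply tsum_congr; intro m
    simp only [Equiv.coe_addRight, hB]
    push_cast
    ring_nf
  calc ∑' m : ℤ, ENNReal.ofReal (Real.exp (-c * ((V : ℝ) - (m.natAbs : ℝ)) ^ 2 / t))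
      ≤ ∑' m : ℤ, (A m + B m) := ENNReal.tsum_le_tsum hpt
    _ = (∑' m : ℤ, A m) + ∑' m : ℤ, B m := ENNReal.tsum_add
    _ ≤ ENNReal.ofReal (2 * (Real.exp (2 * c) / c) * Real.sqrt t) +
        ENNReal.ofReal (2 * (Real.exp (2 * c) / c) * Real.sqrt t) := by
        rw [hAeq, hBeq]; gcongr
    _ = ENNReal.ofReal (4 * (Real.exp (2 * c) / c) * Real.sqrt t) := by
        rw [← ENNReal.ofReal_add (by positivity) (by positivity)]
        ring_nf

/-- For every `d ≥ 1` and `c > 0` there is `C < ∞` such that for every `v ∈ ℤ^d`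
and every `t ≥ 1`:
`Σ_{w ∈ ℤ^d} exp(−c|w|²/t)·(|v−w|+1)^{1−d} ≤ C·t^{1/2}`. -/
theorem gaussian_convolution_bound (d : ℕ) (hd : 1 ≤ d) (c : ℝ) (hc : 0 < c) :
    ∃ C : ℝ, ∀ v : Fin d → ℤ, ∀ t : ℝ, 1 ≤ t →
      (∑' w : Fin d → ℤ,
        Real.exp (-c * ((normInf w : ℝ)) ^ 2 / t) *
          (((normInf (v - w) : ℝ)) + 1) ^ ((1 : ℤ) - (d : ℤ))) ≤ C * Real.sqrt t := by
  classical
  refine ⟨(d : ℝ) * 3 ^ (d - 1) * (4 * (Real.exp (2 * c) / c)), ?_⟩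
  intro v t ht
  have ht0 : (0:ℝ) < t := lt_of_lt_of_le one_pos ht
  set C : ℝ := (d : ℝ) * 3 ^ (d - 1) * (4 * (Real.exp (2 * c) / c)) with hC
  have hC0 : 0 ≤ C := by positivity
  set V : ℕ := nNorm v with hV
  set f : (Fin d → ℤ) → ℝ := fun w =>
    Real.exp (-c * ((normInf w : ℝ)) ^ 2 / t) *
      (((normInf (v - w) : ℝ)) + 1) ^ ((1 : ℤ) - (d : ℤ)) with hfdef
  have hbase : ∀ w : Fin d → ℤ, (0:ℝ) < (normInf (v - w) : ℝ) + 1 := by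
    intro w
    have : (0:ℤ) ≤ normInf (v - w) := Int.natCast_nonneg _
    have : (0:ℝ) ≤ (normInf (v - w) : ℝ) := by exact_mod_cast this
    linarith
  have hf0 : ∀ w, 0 ≤ f w := fun w =>
    mul_nonneg (Real.exp_pos _).le (zpow_nonneg (hbase w).le _)
  -- the per-coordinate majorant
  set g : Fin d → (Fin d → ℤ) → ℝ≥0∞ := fun i w =>
    if (∀ j, (v j - w j).natAbs ≤ (v i - w i).natAbs) then
      ENNReal.ofReal ((((v i - w i).natAbs : ℝ) + 1) ^ ((1 : ℤ) - (d : ℤ)) *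
        Real.exp (-c * ((V : ℝ) - ((v i - w i).natAbs : ℝ)) ^ 2 / t))
    else 0 with hg
  -- Step A: pointwise bound
  have stepA : ∀ w, ENNReal.ofReal (f w) ≤ ∑ i : Fin d, g i w := by
    intro w
    obtain ⟨i₀, -, hi₀⟩ := Finset.exists_mem_eq_sup (Finset.univ : Finset (Fin d))
      ⟨⟨0, hd⟩, Finset.mem_univ _⟩ (fun i => ((v - w) i).natAbs)
    have hr : nNorm (v - w) = (v i₀ - w i₀).natAbs := hi₀
    have hcond : ∀ j, (v j - w j).natAbs ≤ (v i₀ - w i₀).natAbs := by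
      intro j
      rw [← hr]
      exact Finset.le_sup (f := fun i => ((v - w) i).natAbs) (Finset.mem_univ j)
    set r : ℕ := (v i₀ - w i₀).natAbs with hrdef
    have htri1 : V ≤ r + nNorm w := by
      have h := nNorm_add_le (v - w) w
      rw [sub_add_cancel, hr] at h
      exact h
    have htri2 : r ≤ V + nNorm w := by
      have h := nNorm_add_le v (-w)
      rw [show v + -w = v - w from (sub_eq_add_neg v w).symm, hr, nNorm_neg] at h
      exact h
    have h1 : ((V:ℝ)) ≤ (r:ℝ) + (nNorm w : ℝ) := by exact_mod_cast htri1
    have h2 : ((r:ℝ)) ≤ (V:ℝ) + (nNorm w : ℝ) := by exact_mod_cast htri2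
    have hsq : ((V : ℝ) - (r : ℝ)) ^ 2 ≤ ((nNorm w : ℝ)) ^ 2 := by
      apply sq_le_sq' <;> linarith
    have hexp : Real.exp (-c * ((normInf w : ℝ)) ^ 2 / t) ≤
        Real.exp (-c * ((V:ℝ) - (r:ℝ)) ^ 2 / t) := by
      apply Real.exp_le_exp.mpr
      rw [div_le_div_iff_of_pos_right ht0]
      have hcast : ((normInf w : ℝ)) = ((nNorm w : ℕ) : ℝ) := by
        rw [normInf_eq]; push_cast; ring
      rw [hcast]
      nlinarith
    have hcast2 : ((normInf (v - w) : ℝ)) = (r:ℝ) := by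
      rw [normInf_eq, hr]; push_cast; ring
    have hfle : f w ≤ (((r:ℝ) + 1) ^ ((1:ℤ) - (d:ℤ))) *
        Real.exp (-c * ((V:ℝ) - (r:ℝ)) ^ 2 / t) := by
      have hz : (0:ℝ) ≤ ((r:ℝ) + 1) ^ ((1:ℤ) - (d:ℤ)) := zpow_nonneg (by positivity) _
      calc f w = Real.exp (-c * ((normInf w : ℝ)) ^ 2 / t) *
            (((r:ℝ) + 1) ^ ((1:ℤ) - (d:ℤ))) := by rw [hfdef]; simp only []; rw [hcast2]
        _ ≤ Real.exp (-c * ((V:ℝ) - (r:ℝ)) ^ 2 / t) *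
            (((r:ℝ) + 1) ^ ((1:ℤ) - (d:ℤ))) := mul_le_mul_of_nonneg_right hexp hz
        _ = (((r:ℝ) + 1) ^ ((1:ℤ) - (d:ℤ))) *
            Real.exp (-c * ((V:ℝ) - (r:ℝ)) ^ 2 / t) := mul_comm _ _
    have hgi : g i₀ w = ENNReal.ofReal ((((r:ℕ):ℝ) + 1) ^ ((1:ℤ) - (d:ℤ)) *
        Real.exp (-c * ((V:ℝ) - ((r:ℕ):ℝ)) ^ 2 / t)) := by
      simp only [hg]
      rw [if_pos hcond]
    have : ENNReal.ofReal (f w) ≤ g i₀ w := by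
      rw [hgi]
      exact ENNReal.ofReal_le_ofReal hfle
    exact this.trans (Finset.single_le_sum (f := fun i => g i w)
      (fun i _ => zero_le) (Finset.mem_univ i₀))
  -- Step C: per-coordinate sum bound
  have stepC : ∀ i : Fin d, ∑' w : Fin d → ℤ, g i w ≤
      ENNReal.ofReal ((3:ℝ) ^ (d - 1)) *
        ENNReal.ofReal (4 * (Real.exp (2 * c) / c) * Real.sqrt t) := by
    intro i
    set e := Equiv.funSplitAt i ℤ with he_def
    have he : ∑' w : Fin d → ℤ, g i w =
        ∑' n : ℤ, ∑' y : {j : Fin d // j ≠ i} → ℤ, g i (e.symm (n, y)) := by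
      rw [← Equiv.tsum_eq e.symm (g i), ENNReal.tsum_prod']
    have inner : ∀ n : ℤ, (∑' y : {j : Fin d // j ≠ i} → ℤ, g i (e.symm (n, y))) ≤
        ENNReal.ofReal ((3:ℝ) ^ (d - 1)) *
          ENNReal.ofReal (Real.exp (-c * ((V:ℝ) - (((v i - n).natAbs : ℕ) : ℝ)) ^ 2 / t)) := by
      intro n
      set R : ℕ := (v i - n).natAbs with hR
      set T : Finset ({j : Fin d // j ≠ i} → ℤ) :=
        Fintype.piFinset (fun j => Finset.Icc (v j.1 - (R:ℤ)) (v j.1 + (R:ℤ))) with hT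
      have hwi : ∀ y : {j : Fin d // j ≠ i} → ℤ, (e.symm (n, y)) i = n := by
        intro y; simp [he_def]
      have hwj : ∀ (y : {j : Fin d // j ≠ i} → ℤ) (j : Fin d) (hj : j ≠ i),
          (e.symm (n, y)) j = y ⟨j, hj⟩ := by
        intro y j hj; simp [he_def, hj]
      have hvan : ∀ y ∉ T, g i (e.symm (n, y)) = 0 := by
        intro y hy
        simp only [hg]
        rw [if_neg]
        intro hcond
        apply hy
        rw [hT, Fintype.mem_piFinset]
        intro j
        have h1 := hcond j.1
        rw [hwj y j.1 j.2, hwi] at h1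
        rw [Finset.mem_Icc]
        rw [← hR] at h1
        have heta : y ⟨j.1, j.2⟩ = y j := rfl
        rw [heta] at h1
        constructor <;> omega
      have hterm : ∀ y : {j : Fin d // j ≠ i} → ℤ, g i (e.symm (n, y)) ≤
          ENNReal.ofReal ((((R:ℕ):ℝ) + 1) ^ ((1:ℤ) - (d:ℤ)) *
            Real.exp (-c * ((V:ℝ) - ((R:ℕ):ℝ)) ^ 2 / t)) := by
        intro y
        simp only [hg]
        split_ifs with h
        · apply le_of_eq
          rw [hwi y, ← hR]
        · exact zero_le
      have hcardIcc : ∀ j : {j : Fin d // j ≠ i},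
          (Finset.Icc (v j.1 - (R:ℤ)) (v j.1 + (R:ℤ))).card = 2*R+1 := by
        intro j; rw [Int.card_Icc]; omega
      have hcardsub : Fintype.card {j : Fin d // j ≠ i} = d - 1 := by
        have := Fintype.card_subtype_compl (fun j : Fin d => j = i)
        simp only [Fintype.card_subtype_eq, Fintype.card_fin] at this
        convert this using 2
      have hcard : T.card = (2*R+1) ^ (d - 1) := by
        rw [hT, Fintype.card_piFinset]
        rw [Finset.prod_congr rfl (fun j _ => hcardIcc j), Finset.prod_const]
        rw [Finset.card_univ, hcardsub]
      have hkey : (T.card : ℝ≥0∞) *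
          ENNReal.ofReal ((((R:ℕ):ℝ) + 1) ^ ((1:ℤ) - (d:ℤ)) *
            Real.exp (-c * ((V:ℝ) - ((R:ℕ):ℝ)) ^ 2 / t)) ≤
          ENNReal.ofReal ((3:ℝ) ^ (d - 1)) *
            ENNReal.ofReal (Real.exp (-c * ((V:ℝ) - ((R:ℕ):ℝ)) ^ 2 / t)) := by
        rw [hcard]
        have hc1 : (((2*R+1) ^ (d - 1) : ℕ) : ℝ≥0∞) =
            ENNReal.ofReal ((((2*R+1) : ℕ) : ℝ) ^ (d - 1)) := by
          rw [← ENNReal.ofReal_natCast]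
          congr 1
          push_cast
          ring
        rw [hc1, ← ENNReal.ofReal_mul (by positivity), ← ENNReal.ofReal_mul (by positivity)]
        apply ENNReal.ofReal_le_ofReal
        have hzx : (((R:ℕ):ℝ) + 1) ^ ((1:ℤ) - (d:ℤ)) = ((((R:ℕ):ℝ) + 1) ^ (d - 1 : ℕ))⁻¹ := by
          rw [← zpow_natCast, ← zpow_neg]
          congr 1
          have : ((d - 1 : ℕ) : ℤ) = (d : ℤ) - 1 := by
            have : (1:ℕ) ≤ d := hd
            omega
          rw [this]
          ring
        rw [hzx]
        have hx0 : (0:ℝ) < ((R:ℕ):ℝ) + 1 := by positivity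
        have hxp : (0:ℝ) < (((R:ℕ):ℝ) + 1) ^ (d - 1) := by positivity
        have h2 : (((2*R+1) : ℕ) : ℝ) ≤ 3 * (((R:ℕ):ℝ) + 1) := by push_cast; linarith
        have h3 : (((2*R+1) : ℕ) : ℝ) ^ (d - 1) ≤
            (3:ℝ) ^ (d - 1) * (((R:ℕ):ℝ) + 1) ^ (d - 1) := by
          rw [← mul_pow]
          exact pow_le_pow_left₀ (by positivity) h2 _
        have hE : (0:ℝ) ≤ Real.exp (-c * ((V:ℝ) - ((R:ℕ):ℝ)) ^ 2 / t) := (Real.exp_pos _).le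
        calc (((2*R+1) : ℕ) : ℝ) ^ (d - 1) * (((((R:ℕ):ℝ) + 1) ^ (d - 1 : ℕ))⁻¹ *
              Real.exp (-c * ((V:ℝ) - ((R:ℕ):ℝ)) ^ 2 / t))
            = ((((2*R+1) : ℕ) : ℝ) ^ (d - 1) / (((R:ℕ):ℝ) + 1) ^ (d - 1)) *
              Real.exp (-c * ((V:ℝ) - ((R:ℕ):ℝ)) ^ 2 / t) := by ring
          _ ≤ (3:ℝ) ^ (d - 1) * Real.exp (-c * ((V:ℝ) - ((R:ℕ):ℝ)) ^ 2 / t) := by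
              apply mul_le_mul_of_nonneg_right _ hE
              rw [div_le_iff₀ hxp]
              exact h3
      calc ∑' y : {j : Fin d // j ≠ i} → ℤ, g i (e.symm (n, y))
          = ∑ y ∈ T, g i (e.symm (n, y)) := tsum_eq_sum hvan
        _ ≤ ∑ _y ∈ T, ENNReal.ofReal ((((R:ℕ):ℝ) + 1) ^ ((1:ℤ) - (d:ℤ)) *
              Real.exp (-c * ((V:ℝ) - ((R:ℕ):ℝ)) ^ 2 / t)) :=
            Finset.sum_le_sum (fun y _ => hterm y)
        _ = (T.card : ℝ≥0∞) * ENNReal.ofReal ((((R:ℕ):ℝ) + 1) ^ ((1:ℤ) - (d:ℤ)) *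
              Real.exp (-c * ((V:ℝ) - ((R:ℕ):ℝ)) ^ 2 / t)) := by
            rw [Finset.sum_const, nsmul_eq_mul]
        _ ≤ _ := hkey
    calc ∑' w : Fin d → ℤ, g i w
        = ∑' n : ℤ, ∑' y : {j : Fin d // j ≠ i} → ℤ, g i (e.symm (n, y)) := he
      _ ≤ ∑' n : ℤ, ENNReal.ofReal ((3:ℝ) ^ (d - 1)) *
            ENNReal.ofReal (Real.exp (-c * ((V:ℝ) - (((v i - n).natAbs : ℕ) : ℝ)) ^ 2 / t)) :=
          ENNReal.tsum_le_tsum inner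
      _ = ENNReal.ofReal ((3:ℝ) ^ (d - 1)) *
            ∑' n : ℤ, ENNReal.ofReal (Real.exp (-c * ((V:ℝ) - (((v i - n).natAbs : ℕ) : ℝ)) ^ 2 / t)) :=
          ENNReal.tsum_mul_left
      _ = ENNReal.ofReal ((3:ℝ) ^ (d - 1)) *
            ∑' m : ℤ, ENNReal.ofReal (Real.exp (-c * ((V:ℝ) - ((m.natAbs : ℕ) : ℝ)) ^ 2 / t)) := by
          congr 1
          exact Equiv.tsum_eq (Equiv.subLeft (v i))
            (fun m => ENNReal.ofReal (Real.exp (-c * ((V:ℝ) - ((m.natAbs : ℕ) : ℝ)) ^ 2 / t)))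
      _ ≤ ENNReal.ofReal ((3:ℝ) ^ (d - 1)) *
            ENNReal.ofReal (4 * (Real.exp (2 * c) / c) * Real.sqrt t) :=
          mul_le_mul_right (shiftedGaussSum_le c t hc ht V) _
  -- assemble
  have htotal : ∑' w : Fin d → ℤ, ENNReal.ofReal (f w) ≤ ENNReal.ofReal (C * Real.sqrt t) := by
    calc ∑' w : Fin d → ℤ, ENNReal.ofReal (f w)
        ≤ ∑' w : Fin d → ℤ, ∑ i : Fin d, g i w := ENNReal.tsum_le_tsum stepA
      _ = ∑ i : Fin d, ∑' w : Fin d → ℤ, g i w := Summable.tsum_finsetSum (fun i _ => ENNReal.summable)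
      _ ≤ ∑ _i : Fin d, (ENNReal.ofReal ((3:ℝ) ^ (d - 1)) *
            ENNReal.ofReal (4 * (Real.exp (2 * c) / c) * Real.sqrt t)) :=
          Finset.sum_le_sum (fun i _ => stepC i)
      _ = (d : ℝ≥0∞) * (ENNReal.ofReal ((3:ℝ) ^ (d - 1)) *
            ENNReal.ofReal (4 * (Real.exp (2 * c) / c) * Real.sqrt t)) := by
          rw [Finset.sum_const, Finset.card_univ, Fintype.card_fin, nsmul_eq_mul]
      _ = ENNReal.ofReal (C * Real.sqrt t) := by
          rw [← ENNReal.ofReal_natCast d, ← ENNReal.ofReal_mul (by positivity),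
            ← ENNReal.ofReal_mul (by positivity)]
          congr 1
          rw [hC]
          ring
  by_cases hsummable : Summable f
  · rw [← ENNReal.ofReal_tsum_of_nonneg hf0 hsummable] at htotal
    exact (ENNReal.ofReal_le_ofReal_iff (by positivity)).mp htotal
  · rw [tsum_eq_zero_of_not_summable hsummable]
    positivity
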